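/- For every n ∈ ℕ, n ≥ 1, there exist a tensor A ∈ ℂ^{2n×2n×2} with rank(A) = 3n and a sequence of tensors {A_k} ⊂ ℂ^{2n×2n×2}, k ∈ ℕ, such that rank(A_k) = 2n for every k and A_k → A as k → ∞ in the Euclidean topology (i.e., entrywise). -/

import Mathlib

open Matrix Finset

/-- The tensor rank of an array `A ∈ 𝔽^{l×m×n}`: the minimal `r` such that `A` is a sum of
`r` elementary (decomposable) tensors `x ⊗ y ⊗ z = (x_i y_j z_k)`. -/
noncomputable def tensorRank {𝔽 : Type*} [Field 𝔽] {l m n : ℕ}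
    (A : Fin l → Fin m → Fin n → 𝔽) : ℕ :=
  sInf {r : ℕ | ∃ (x : Fin r → Fin l → 𝔽) (y : Fin r → Fin m → 𝔽) (z : Fin r → Fin n → 𝔽),
      A = ∑ i : Fin r, fun p q s => x i p * y i q * z i s}

/-- The multilinear matrix multiplication: `(L,M,N)·A` has entries
`b_{pqr} = Σ_{i,j,k} L_{pi} M_{qj} N_{rk} a_{ijk}`. -/
def mulAct {𝔽 : Type*} [Field 𝔽] {l m n : ℕ}
    (L : Matrix (Fin l) (Fin l) 𝔽) (M : Matrix (Fin m) (Fin m) 𝔽) (N : Matrix (Fin n) (Fin n) 𝔽)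
    (A : Fin l → Fin m → Fin n → 𝔽) : Fin l → Fin m → Fin n → 𝔽 :=
  fun p q r => ∑ i, ∑ j, ∑ k, L p i * M q j * N r k * A i j k

/-- The elementary (decomposable) tensor `x ⊗ y ⊗ z = (x_i y_j z_k)`. -/
def elemT {𝔽 : Type*} [Field 𝔽] {l m n : ℕ}
    (x : Fin l → 𝔽) (y : Fin m → 𝔽) (z : Fin n → 𝔽) : Fin l → Fin m → Fin n → 𝔽 :=
  fun i j k => x i * y j * z k

lemma mem_ranks {l m n : ℕ} {ι : Type*} [Fintype ι]
    (A : Fin l → Fin m → Fin n → ℂ) (x : ι → Fin l → ℂ) (y : ι → Fin m → ℂ) (z : ι → Fin n → ℂ)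
    (h : ∀ p q s, A p q s = ∑ i : ι, x i p * y i q * z i s) :
    Fintype.card ι ∈ {r : ℕ | ∃ (x : Fin r → Fin l → ℂ) (y : Fin r → Fin m → ℂ)
      (z : Fin r → Fin n → ℂ), A = ∑ i : Fin r, fun p q s => x i p * y i q * z i s} := by
  refine ⟨x ∘ (Fintype.equivFin ι).symm, y ∘ (Fintype.equivFin ι).symm,
    z ∘ (Fintype.equivFin ι).symm, ?_⟩
  funext p q s
  simp only [Finset.sum_apply, h p q s, Function.comp]
  exact (Equiv.sum_comp (Fintype.equivFin ι).symm (fun i => x i p * y i q * z i s)).symm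

lemma tensorRank_le_card {l m n : ℕ} {ι : Type*} [Fintype ι]
    (A : Fin l → Fin m → Fin n → ℂ) (x : ι → Fin l → ℂ) (y : ι → Fin m → ℂ) (z : ι → Fin n → ℂ)
    (h : ∀ p q s, A p q s = ∑ i : ι, x i p * y i q * z i s) :
    tensorRank A ≤ Fintype.card ι :=
  Nat.sInf_le (mem_ranks A x y z h)

lemma exists_decomp {l m n : ℕ} (A : Fin l → Fin m → Fin n → ℂ) :
    ∃ (x : Fin (tensorRank A) → Fin l → ℂ) (y : Fin (tensorRank A) → Fin m → ℂ)
      (z : Fin (tensorRank A) → Fin n → ℂ),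
      A = ∑ i : Fin (tensorRank A), fun p q s => x i p * y i q * z i s := by
  have hmem := mem_ranks A (fun pq : Fin l × Fin m => fun p => if pq.1 = p then 1 else 0)
      (fun pq => fun q => if pq.2 = q then 1 else 0) (fun pq => fun s => A pq.1 pq.2 s) ?_
  · exact Nat.sInf_mem ⟨_, hmem⟩
  · intro p q s
    rw [Fintype.sum_prod_type]
    simp [Finset.sum_ite_eq, ite_and]

lemma le_tensorRank_of_inj {l m n : ℕ} (A : Fin l → Fin m → Fin n → ℂ)
    (hinj : ∀ v : Fin m → ℂ, (∀ p s, ∑ q, A p q s * v q = 0) → v = 0) :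
    m ≤ tensorRank A := by
  obtain ⟨x, y, z, hA⟩ := exists_decomp A
  by_contra hcon
  push_neg at hcon
  -- Y as linear map
  set f : (Fin m → ℂ) →ₗ[ℂ] (Fin (tensorRank A) → ℂ) := Matrix.mulVecLin (Matrix.of y) with hf
  have hninj : ¬ Function.Injective f := by
    intro hi
    have := LinearMap.finrank_le_finrank_of_injective hi
    simp [Module.finrank_fintype_fun_eq_card] at this
    omega
  have hker : LinearMap.ker f ≠ ⊥ := fun h => hninj (LinearMap.ker_eq_bot.mp h)
  obtain ⟨v, hv, hv0⟩ := Submodule.exists_mem_ne_zero_of_ne_bot hker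
  have hfv : ∀ i : Fin (tensorRank A), ∑ q, y i q * v q = 0 := by
    intro i
    have : f v = 0 := hv
    have := congrFun this i
    simpa [hf, Matrix.mulVecLin, Matrix.mulVec, dotProduct] using this
  have hAv : ∀ p s, ∑ q, A p q s * v q = 0 := by
    intro p s
    have hApq : ∀ q, A p q s = ∑ i, x i p * y i q * z i s := by
      intro q
      have h3 := congrFun (congrFun (congrFun hA p) q) s
      rw [h3]; simp [Finset.sum_apply]
    calc ∑ q, A p q s * v q = ∑ q, ∑ i, (x i p * z i s) * (y i q * v q) := by
          refine Finset.sum_congr rfl fun q _ => ?_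
          rw [hApq q, Finset.sum_mul]
          exact Finset.sum_congr rfl fun i _ => by ring
      _ = ∑ i, (x i p * z i s) * ∑ q, y i q * v q := by
          rw [Finset.sum_comm]
          exact Finset.sum_congr rfl fun i _ => by rw [Finset.mul_sum]
      _ = 0 := by simp [hfv]
  exact hv0 (hinj v hAv)

lemma subst_aux {l m n r' : ℕ} (T : Fin l → Fin m → Fin n → ℂ) (p₀ : Fin l)
    (x : Fin (r' + 1) → Fin l → ℂ) (y : Fin (r' + 1) → Fin m → ℂ) (z : Fin (r' + 1) → Fin n → ℂ)
    (hdec : ∀ p q s, T p q s = ∑ i, x i p * y i q * z i s)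
    (i₀ : Fin (r' + 1)) (hx0 : x i₀ p₀ ≠ 0) :
    tensorRank (fun p q s => T p q s - (x i₀ p / x i₀ p₀) * T p₀ q s) ≤ r' := by
  have key : ∀ p q s, T p q s - (x i₀ p / x i₀ p₀) * T p₀ q s =
      ∑ j : Fin r', (fun i p => x i p - (x i₀ p / x i₀ p₀) * x i p₀) (i₀.succAbove j) p *
        y (i₀.succAbove j) q * z (i₀.succAbove j) s := by
    intro p q s
    have expand : T p q s - (x i₀ p / x i₀ p₀) * T p₀ q s =
        ∑ i : Fin (r' + 1), (x i p - (x i₀ p / x i₀ p₀) * x i p₀) * y i q * z i s := by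
      rw [hdec p q s, hdec p₀ q s, Finset.mul_sum, ← Finset.sum_sub_distrib]
      exact Finset.sum_congr rfl fun i _ => by ring
    rw [expand, Fin.sum_univ_succAbove _ i₀]
    have : (x i₀ p - (x i₀ p / x i₀ p₀) * x i₀ p₀) = 0 := by
      field_simp
      ring
    rw [this]
    simp
  have := tensorRank_le_card (fun p q s => T p q s - (x i₀ p / x i₀ p₀) * T p₀ q s)
    (fun j p => x (i₀.succAbove j) p - (x i₀ p / x i₀ p₀) * x (i₀.succAbove j) p₀)
    (fun j => y (i₀.succAbove j)) (fun j => z (i₀.succAbove j)) (fun p q s => key p q s)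
  simpa using this

lemma subst_step {l m n : ℕ} (T : Fin l → Fin m → Fin n → ℂ) (p₀ : Fin l)
    (hT : ∃ q s, T p₀ q s ≠ 0) :
    ∃ c : Fin l → ℂ, c p₀ = 1 ∧
      tensorRank (fun p q s => T p q s - c p * T p₀ q s) + 1 ≤ tensorRank T := by
  obtain ⟨x, y, z, hA⟩ := exists_decomp T
  have hApq : ∀ p q s, T p q s = ∑ i, x i p * y i q * z i s := by
    intro p q s
    have h3 := congrFun (congrFun (congrFun hA p) q) s
    rw [h3]; simp [Finset.sum_apply]
  obtain ⟨q₀, s₀, hq0⟩ := hT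
  rw [hApq] at hq0
  obtain ⟨i₀, -, hi₀⟩ := Finset.exists_ne_zero_of_sum_ne_zero hq0
  have hx0 : x i₀ p₀ ≠ 0 := fun h => hi₀ (by simp [h])
  have hr0 : tensorRank T ≠ 0 := fun h => (h ▸ i₀).elim0
  obtain ⟨r', hr'⟩ : ∃ r', tensorRank T = r' + 1 := ⟨tensorRank T - 1, by omega⟩
  have e : Fin (tensorRank T) ≃ Fin (r' + 1) := finCongr hr'
  have hdec' : ∀ p q s, T p q s = ∑ i : Fin (r' + 1),
      (x ∘ e.symm) i p * (y ∘ e.symm) i q * (z ∘ e.symm) i s := by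
    intro p q s
    rw [hApq p q s]
    exact (Equiv.sum_comp e.symm (fun i => x i p * y i q * z i s)).symm
  refine ⟨fun p => (x ∘ e.symm) (e i₀) p / (x ∘ e.symm) (e i₀) p₀, ?_, ?_⟩
  · simp only [Function.comp, Equiv.symm_apply_apply]
    exact div_self hx0
  · have := subst_aux T p₀ (x ∘ e.symm) (y ∘ e.symm) (z ∘ e.symm) hdec' (e i₀)
      (by simpa [Function.comp] using hx0)
    show tensorRank (fun p q s => T p q s -
      ((x ∘ e.symm) (e i₀) p / (x ∘ e.symm) (e i₀) p₀) * T p₀ q s) + 1 ≤ tensorRank T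
    omega

lemma main_lower (n : ℕ) : ∀ i j, i + j = n →
    ∀ T : Fin (2*n) → Fin (2*n) → Fin 2 → ℂ,
    ∀ d : Fin (2*n) → Fin (2*n) → ℂ,
    (∀ p q : Fin (2*n), ¬(n ≤ q.val ∧ q.val < n + j) → d p q = 0) →
    (∀ p : Fin (2*n), ¬(n ≤ p.val ∧ p.val < n + j) → ∀ q : Fin (2*n),
        T p q 0 = (if p = q then 1 else 0) + d p q ∧
        T p q 1 = (if p.val < n ∧ q.val = p.val + n then 1 else 0)) →
    2*n + i ≤ tensorRank T := by
  intro i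
  induction i with
  | zero =>
    intro j hj T d hd hinv
    have h := le_tensorRank_of_inj T ?_
    · omega
    intro v hv
    have hhigh : ∀ q : Fin (2*n), n ≤ q.val → v q = 0 := by
      intro q hq
      have hq2 : q.val < 2*n := q.isLt
      obtain ⟨p, hpval⟩ : ∃ p : Fin (2*n), p.val = q.val - n := ⟨⟨q.val - n, by omega⟩, rfl⟩
      have hpn : p.val < n := by omega
      have hrow := hinv p (by omega)
      have hv1 := hv p 1
      have hsum : ∑ q' : Fin (2*n), T p q' 1 * v q' = v q := by
        rw [Finset.sum_eq_single q]
        · rw [(hrow q).2]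
          have : p.val < n ∧ q.val = p.val + n := ⟨hpn, by omega⟩
          simp [this]
        · intro q' _ hne
          rw [(hrow q').2]
          have : ¬(p.val < n ∧ q'.val = p.val + n) := by
            rintro ⟨-, h2⟩
            exact hne (Fin.ext (by omega))
          simp [this]
        · intro h; exact absurd (Finset.mem_univ q) h
      rw [hsum] at hv1
      exact hv1
    -- now low coordinates
    funext q
    by_cases hq : n ≤ q.val
    · exact hhigh q hq
    push_neg at hq
    have hrow := hinv q (by omega)
    have hv0 := hv q 0
    have hsum : ∑ q' : Fin (2*n), T q q' 0 * v q' = v q := by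
      have : ∀ q' : Fin (2*n), T q q' 0 * v q' =
          (if q = q' then v q' else 0) + d q q' * v q' := by
        intro q'
        rw [(hrow q').1, add_mul]
        congr 1
        split <;> simp
      rw [Finset.sum_congr rfl fun q' _ => this q', Finset.sum_add_distrib]
      rw [Finset.sum_ite_eq]
      simp only [Finset.mem_univ, if_true]
      have hz : ∑ q' : Fin (2*n), d q q' * v q' = 0 := by
        apply Finset.sum_eq_zero
        intro q' _
        by_cases hq' : n ≤ q'.val
        · rw [hhigh q' hq', mul_zero]
        · rw [hd q q' (by omega), zero_mul]
      rw [hz, add_zero]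
    rw [hsum] at hv0
    exact hv0
  | succ i ih =>
    intro j hj T d hd hinv
    have hjn : j < n := by omega
    set p₁ : Fin (2*n) := ⟨n + j, by omega⟩ with hp₁
    have hp₁cond : ¬(n ≤ p₁.val ∧ p₁.val < n + j) := by simp [hp₁]
    have hrow₁ := hinv p₁ hp₁cond
    have hne : ∃ q s, T p₁ q s ≠ 0 := by
      refine ⟨p₁, 0, ?_⟩
      rw [(hrow₁ p₁).1, hd p₁ p₁ (by simp [hp₁])]
      simp
    obtain ⟨c, hc1, hcrank⟩ := subst_step T p₁ hne
    have hIH := ih (j+1) (by omega) (fun p q s => T p q s - c p * T p₁ q s)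
      (fun p q => d p q - c p * ((if p₁ = q then 1 else 0) + d p₁ q)) ?_ ?_
    · omega
    · intro p q hq
      have h1 : d p q = 0 := hd p q (by omega)
      have h2 : d p₁ q = 0 := hd p₁ q (by omega)
      have h3 : p₁ ≠ q := by
        intro h
        have hqv : (q : ℕ) = n + j := by rw [← h]
        exact hq ⟨by omega, by omega⟩
      simp [h1, h2, h3]
    · intro p hp q
      have hp' : ¬(n ≤ p.val ∧ p.val < n + j) := by omega
      have hrp := hinv p hp' q
      have hrp₁ := hrow₁ q
      constructor
      · show T p q 0 - c p * T p₁ q 0 =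
          (if p = q then 1 else 0) + (d p q - c p * ((if p₁ = q then 1 else 0) + d p₁ q))
        rw [hrp.1, hrp₁.1]; ring
      · show T p q 1 - c p * T p₁ q 1 = (if (p:ℕ) < n ∧ (q:ℕ) = (p:ℕ) + n then 1 else 0)
        rw [hrp.2, hrp₁.2]
        have : ¬((p₁:ℕ) < n ∧ (q:ℕ) = (p₁:ℕ) + n) := by
          rintro ⟨h1, -⟩
          have : (p₁ : ℕ) = n + j := rfl
          omega
        simp [this]

lemma A_upper (n : ℕ) :
    tensorRank (fun (p q : Fin (2*n)) (s : Fin 2) => if s = 0 then (if p = q then (1:ℂ) else 0)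
      else (if (p:ℕ) < n ∧ (q:ℕ) = (p:ℕ) + n then 1 else 0)) ≤ 2*n + n := by
  have h := tensorRank_le_card (ι := Fin (2*n) ⊕ Fin n)
    (fun (p q : Fin (2*n)) (s : Fin 2) => if s = 0 then (if p = q then (1:ℂ) else 0)
      else (if (p:ℕ) < n ∧ (q:ℕ) = (p:ℕ) + n then 1 else 0))
    (Sum.elim (fun i p => if p = i then (1:ℂ) else 0)
              (fun j p => if (p:ℕ) = (j:ℕ) then 1 else 0))
    (Sum.elim (fun i q => if q = i then (1:ℂ) else 0)
              (fun j q => if (q:ℕ) = (j:ℕ) + n then 1 else 0))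
    (Sum.elim (fun _ (s : Fin 2) => if s = 0 then (1:ℂ) else 0)
              (fun _ (s : Fin 2) => if s = 0 then 0 else 1)) ?_
  · simpa using h
  intro p q s
  rw [Fintype.sum_sum_type]
  simp only [Sum.elim_inl, Sum.elim_inr]
  have h1 : ∑ i : Fin (2*n), (if p = i then (1:ℂ) else 0) * (if q = i then 1 else 0) *
      (if s = 0 then 1 else 0) = (if p = q then 1 else 0) * (if s = 0 then 1 else 0) := by
    rw [Finset.sum_eq_single p]
    · by_cases h : p = q <;> simp [h, eq_comm]
    · intro b _ hb
      simp [Ne.symm hb]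
    · simp
  have h2 : ∑ j : Fin n, (if (p:ℕ) = (j:ℕ) then (1:ℂ) else 0) *
      (if (q:ℕ) = (j:ℕ) + n then 1 else 0) * (if s = 0 then 0 else 1) =
      (if (p:ℕ) < n ∧ (q:ℕ) = (p:ℕ) + n then 1 else 0) * (if s = 0 then 0 else 1) := by
    by_cases hp : (p:ℕ) < n
    · rw [Finset.sum_eq_single ⟨(p:ℕ), hp⟩]
      · by_cases hq : (q:ℕ) = (p:ℕ) + n <;> simp [hp, hq]
      · intro b _ hb
        have : (p:ℕ) ≠ (b:ℕ) := fun h => hb (Fin.ext h.symm)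
        simp [this]
      · simp
    · rw [Finset.sum_eq_zero]
      · simp [hp]
      · intro j _
        have : (p:ℕ) ≠ (j:ℕ) := fun h => hp (h ▸ j.isLt)
        simp [this]
  rw [h1, h2]
  by_cases hs : s = 0 <;> simp [hs]

lemma Aseq_upper (n : ℕ) (t : ℂ) (ht : t ≠ 0) :
    tensorRank (fun (p q : Fin (2*n)) (s : Fin 2) => if s = 0 then (if p = q then (1:ℂ) else 0)
      else (if (p:ℕ) < n ∧ (q:ℕ) = (p:ℕ) + n then 1
        else if (q:ℕ) < n ∧ (p:ℕ) = (q:ℕ) + n then t^2 else 0)) ≤ 2*n := by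
  have h := tensorRank_le_card (ι := Fin n ⊕ Fin n)
    (fun (p q : Fin (2*n)) (s : Fin 2) => if s = 0 then (if p = q then (1:ℂ) else 0)
      else (if (p:ℕ) < n ∧ (q:ℕ) = (p:ℕ) + n then 1
        else if (q:ℕ) < n ∧ (p:ℕ) = (q:ℕ) + n then t^2 else 0))
    (Sum.elim (fun j p => if (p:ℕ) = (j:ℕ) then 1 else if (p:ℕ) = (j:ℕ) + n then t else 0)
              (fun j p => if (p:ℕ) = (j:ℕ) then 1 else if (p:ℕ) = (j:ℕ) + n then -t else 0))
    (Sum.elim (fun j q => if (q:ℕ) = (j:ℕ) then 2⁻¹ else if (q:ℕ) = (j:ℕ) + n then (2*t)⁻¹ else 0)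
              (fun j q => if (q:ℕ) = (j:ℕ) then 2⁻¹ else if (q:ℕ) = (j:ℕ) + n then -(2*t)⁻¹ else 0))
    (Sum.elim (fun _ (s : Fin 2) => if s = 0 then 1 else t)
              (fun _ (s : Fin 2) => if s = 0 then 1 else -t)) ?_
  · simpa [two_mul] using h
  intro p q s
  rw [Fintype.sum_sum_type]
  simp only [Sum.elim_inl, Sum.elim_inr]
  have hp2 : (p:ℕ) < 2*n := p.isLt
  have hq2 : (q:ℕ) < 2*n := q.isLt
  have hblock : ∀ ε : ℂ, ∑ j : Fin n,
      (if (p:ℕ) = (j:ℕ) then 1 else if (p:ℕ) = (j:ℕ) + n then ε * t else 0) *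
      (if (q:ℕ) = (j:ℕ) then 2⁻¹ else if (q:ℕ) = (j:ℕ) + n then ε * (2*t)⁻¹ else 0) *
      (if s = 0 then 1 else ε * t) =
      (if (p:ℕ) < n
        then (if (q:ℕ) = (p:ℕ) then 2⁻¹ else if (q:ℕ) = (p:ℕ) + n then ε * (2*t)⁻¹ else 0)
        else (ε * t) * (if (q:ℕ) + n = (p:ℕ) then 2⁻¹ else if (q:ℕ) = (p:ℕ) then ε * (2*t)⁻¹ else 0))
      * (if s = 0 then 1 else ε * t) := by
    intro ε
    by_cases hp : (p:ℕ) < n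
    · rw [Finset.sum_eq_single ⟨(p:ℕ), hp⟩]
      · have e1 : (p:ℕ) = ((⟨(p:ℕ), hp⟩ : Fin n):ℕ) := rfl
        simp only [← e1, if_pos rfl, if_pos hp, one_mul, if_true]
      · intro b _ hb
        have hb1 : (p:ℕ) ≠ (b:ℕ) := fun h => hb (Fin.ext h.symm)
        have hb2 : (p:ℕ) ≠ (b:ℕ) + n := by
          intro h; have := b.isLt; omega
        simp [hb1, hb2]
      · simp
    · push_neg at hp
      have hpn : (p:ℕ) - n < n := by omega
      rw [Finset.sum_eq_single ⟨(p:ℕ) - n, hpn⟩]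
      · have e1 : ((⟨(p:ℕ) - n, hpn⟩ : Fin n):ℕ) = (p:ℕ) - n := rfl
        have c1 : ¬((p:ℕ) = (p:ℕ) - n) := by omega
        have c2 : (p:ℕ) = (p:ℕ) - n + n := by omega
        have c3 : ((q:ℕ) = (p:ℕ) - n) ↔ ((q:ℕ) + n = (p:ℕ)) := by omega
        have c4 : ((q:ℕ) = (p:ℕ) - n + n) ↔ ((q:ℕ) = (p:ℕ)) := by omega
        simp only [e1, c1, if_false, if_pos c2, if_neg (not_lt.mpr hp), c3, c4]
      · intro b _ hb
        have hblt := b.isLt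
        have hb1 : (p:ℕ) ≠ (b:ℕ) := by omega
        have hb2 : (p:ℕ) ≠ (b:ℕ) + n := by
          intro h
          apply hb; apply Fin.ext
          show (b:ℕ) = (p:ℕ) - n
          omega
        simp [hb1, hb2]
      · simp
  have hb1 := hblock 1
  have hb2 := hblock (-1)
  simp only [neg_mul, one_mul] at hb1 hb2
  rw [hb1, hb2]
  have hn0 : 0 < n := by omega
  by_cases hp : (p:ℕ) < n
  · by_cases hq1 : (q:ℕ) = (p:ℕ)
    · have e1 : p = q := Fin.ext hq1.symm
      have c1 : ¬((p:ℕ) < n ∧ (q:ℕ) = (p:ℕ) + n) := by omega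
      have c2 : ¬((q:ℕ) < n ∧ (p:ℕ) = (q:ℕ) + n) := by omega
      have d1 : ¬((q:ℕ) = (p:ℕ) + n) := by omega
      simp only [eq_true e1, eq_true hq1, eq_false c1, eq_false c2, eq_false d1, eq_true hp,
        true_and, false_and, and_true, and_false, if_true, if_false]
      by_cases hs : s = (0:Fin 2)
      · simp only [eq_true hs, if_true]; norm_num
      · simp only [eq_false hs, if_false]; ring
    · by_cases hq2 : (q:ℕ) = (p:ℕ) + n
      · have e1 : p ≠ q := fun h => hq1 (by rw [h])
        have c1 : (p:ℕ) < n ∧ (q:ℕ) = (p:ℕ) + n := ⟨hp, hq2⟩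
        have c2 : ¬((q:ℕ) < n ∧ (p:ℕ) = (q:ℕ) + n) := by omega
        simp only [eq_false e1, eq_false hq1, eq_true hq2, eq_true c1, eq_false c2,
          eq_true hp, true_and, false_and, and_true, and_false, if_true, if_false]
        by_cases hs : s = (0:Fin 2)
        · simp only [eq_true hs, if_true]; ring
        · simp only [eq_false hs, if_false]; field_simp <;> ring
      · have e1 : p ≠ q := fun h => hq1 (by rw [h])
        have c1 : ¬((p:ℕ) < n ∧ (q:ℕ) = (p:ℕ) + n) := by omega
        have c2 : ¬((q:ℕ) < n ∧ (p:ℕ) = (q:ℕ) + n) := by omega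
        simp only [eq_false e1, eq_false hq1, eq_false hq2, eq_false c1, eq_false c2,
          eq_true hp, true_and, false_and, and_true, and_false, if_true, if_false]
        by_cases hs : s = (0:Fin 2)
        · simp only [eq_true hs, if_true]; ring
        · simp only [eq_false hs, if_false]; ring
  · have hpn : ¬((p:ℕ) < n) := hp
    by_cases hq1 : (q:ℕ) + n = (p:ℕ)
    · have e1 : p ≠ q := fun h => by omega
      have hq2 : ¬((q:ℕ) = (p:ℕ)) := by omega
      have c1 : ¬((p:ℕ) < n ∧ (q:ℕ) = (p:ℕ) + n) := by omega
      have c2 : (q:ℕ) < n ∧ (p:ℕ) = (q:ℕ) + n := ⟨by omega, by omega⟩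
      have d1 : ¬((q:ℕ) = (p:ℕ) + n) := by omega
      simp only [eq_false e1, eq_true hq1, eq_false hq2, eq_false c1, eq_true c2, eq_false d1,
        eq_false hpn, true_and, false_and, and_true, and_false, if_true, if_false]
      by_cases hs : s = (0:Fin 2)
      · simp only [eq_true hs, if_true]; ring
      · simp only [eq_false hs, if_false]; ring
    · by_cases hq2 : (q:ℕ) = (p:ℕ)
      · have e1 : p = q := Fin.ext hq2.symm
        have c1 : ¬((p:ℕ) < n ∧ (q:ℕ) = (p:ℕ) + n) := by omega
        have c2 : ¬((q:ℕ) < n ∧ (p:ℕ) = (q:ℕ) + n) := by omega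
        simp only [eq_true e1, eq_false hq1, eq_true hq2, eq_false c1, eq_false c2,
          eq_false hpn, true_and, false_and, and_true, and_false, if_true, if_false]
        by_cases hs : s = (0:Fin 2)
        · simp only [eq_true hs, if_true]; field_simp <;> ring
        · simp only [eq_false hs, if_false]; field_simp <;> ring
      · have e1 : p ≠ q := fun h => hq2 (by rw [h])
        have c1 : ¬((p:ℕ) < n ∧ (q:ℕ) = (p:ℕ) + n) := by omega
        have c2 : ¬((q:ℕ) < n ∧ (p:ℕ) = (q:ℕ) + n) := by omega
        have d1 : ¬((q:ℕ) = (p:ℕ) + n) := by omega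
        simp only [eq_false e1, eq_false hq1, eq_false hq2, eq_false c1, eq_false c2, eq_false d1,
          eq_false hpn, true_and, false_and, and_true, and_false, if_true, if_false]
        by_cases hs : s = (0:Fin 2)
        · simp only [eq_true hs, if_true]; ring
        · simp only [eq_false hs, if_false]; ring

/-- For every `n ≥ 1` there exist a tensor `A ∈ ℂ^{2n×2n×2}` with `rank(A) = 3n` and a
sequence of tensors `A_k`, each of tensor rank `2n`, converging to `A` in the Euclidean
(entrywise) topology. -/
theorem exists_rank_threeN_tensor_limit_of_rank_twoN
    (n : ℕ) (hn : 1 ≤ n) :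
    ∃ (A : Fin (2 * n) → Fin (2 * n) → Fin 2 → ℂ)
      (Aseq : ℕ → Fin (2 * n) → Fin (2 * n) → Fin 2 → ℂ),
      tensorRank A = 3 * n ∧
      (∀ k, tensorRank (Aseq k) = 2 * n) ∧
      Filter.Tendsto Aseq Filter.atTop (nhds A) := by
  refine ⟨fun p q s => if s = 0 then (if p = q then (1:ℂ) else 0)
      else (if (p:ℕ) < n ∧ (q:ℕ) = (p:ℕ) + n then 1 else 0),
    fun k p q s => if s = 0 then (if p = q then (1:ℂ) else 0)
      else (if (p:ℕ) < n ∧ (q:ℕ) = (p:ℕ) + n then 1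
        else if (q:ℕ) < n ∧ (p:ℕ) = (q:ℕ) + n then (((k:ℂ)+1)⁻¹)^2 else 0),
    ?_, ?_, ?_⟩
  · -- rank A = 3n
    have hub := A_upper n
    have hlb := main_lower n n 0 (by omega)
      (fun p q s => if s = 0 then (if p = q then (1:ℂ) else 0)
        else (if (p:ℕ) < n ∧ (q:ℕ) = (p:ℕ) + n then 1 else 0))
      (fun _ _ => 0) (fun p q _ => rfl) ?_
    · omega
    · intro p hp q
      constructor
      · show (if (0:Fin 2) = 0 then (if p = q then (1:ℂ) else 0) else _) = _
        simp
      · show (if (1:Fin 2) = 0 then _ else (if (p:ℕ) < n ∧ (q:ℕ) = (p:ℕ) + n then (1:ℂ) else 0)) = _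
        simp
  · -- rank Aseq k = 2n
    intro k
    show tensorRank (fun (p q : Fin (2*n)) (s : Fin 2) => if s = 0 then (if p = q then (1:ℂ) else 0)
      else (if (p:ℕ) < n ∧ (q:ℕ) = (p:ℕ) + n then 1
        else if (q:ℕ) < n ∧ (p:ℕ) = (q:ℕ) + n then (((k:ℂ)+1)⁻¹)^2 else 0)) = 2 * n
    have ht : ((k:ℂ)+1)⁻¹ ≠ 0 := by
      apply inv_ne_zero
      have : ((k+1:ℕ):ℂ) ≠ 0 := Nat.cast_ne_zero.mpr (Nat.succ_ne_zero k)
      push_cast at this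
      exact this
    have hub := Aseq_upper n (((k:ℂ)+1)⁻¹) ht
    have hlb := le_tensorRank_of_inj
      (fun (p q : Fin (2*n)) (s : Fin 2) => if s = 0 then (if p = q then (1:ℂ) else 0)
        else (if (p:ℕ) < n ∧ (q:ℕ) = (p:ℕ) + n then 1
          else if (q:ℕ) < n ∧ (p:ℕ) = (q:ℕ) + n then (((k:ℂ)+1)⁻¹)^2 else 0)) ?_
    · omega
    · intro v hv
      funext q
      have h0 := hv q 0
      simp only [ite_mul, one_mul, zero_mul, if_pos rfl, eq_self_iff_true, if_true] at h0
      rw [Finset.sum_ite_eq] at h0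
      simpa using h0
  · -- convergence
    rw [tendsto_pi_nhds]
    intro p
    rw [tendsto_pi_nhds]
    intro q
    rw [tendsto_pi_nhds]
    intro s
    by_cases hs : s = (0:Fin 2)
    · simp only [eq_true hs, if_true]
      exact tendsto_const_nhds
    · simp only [eq_false hs, if_false]
      by_cases h1 : (p:ℕ) < n ∧ (q:ℕ) = (p:ℕ) + n
      · simp only [eq_true h1, if_true]
        exact tendsto_const_nhds
      · simp only [eq_false h1, if_false]
        by_cases h2 : (q:ℕ) < n ∧ (p:ℕ) = (q:ℕ) + n
        · simp only [eq_true h2, if_true]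
          have hbase : Filter.Tendsto (fun k : ℕ => ((k:ℂ)+1)⁻¹) Filter.atTop (nhds 0) := by
            have heq : (fun k : ℕ => ((k:ℂ)+1)⁻¹) = fun k : ℕ => ((1/((k:ℝ)+1) : ℝ) : ℂ) := by
              funext k
              push_cast
              rw [one_div]
            rw [heq]
            have := (Complex.continuous_ofReal.tendsto 0).comp
              tendsto_one_div_add_atTop_nhds_zero_nat
            simpa [Function.comp_def] using this
          have := hbase.pow 2
          simpa using this
        · simp only [eq_false h2, if_false]
          exact tendsto_const_nhds
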